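/- Let α, β be ordinals below ω^ω and n, m natural numbers. Then: (1) if α ≻ₙ β then either α ≻_{n+1} β+1 or α = β+1; (2) if α ≻ₙ β and n ≥ m then H_α(n) > H_β(m); (3) if n > m then H_α(n) > H_α(m); (4) if α, β > 0 and the least exponent occurring in the Cantor normal form of α is greater than or equal to the greatest exponent occurring in the Cantor normal form of β, then H_{α+β}(n) = H_α(H_β(n)). -/

import Mathlib

/-!  Ordinals below `ω^ω` are represented by their Cantor normal forms: a list
`l : List ℕ` represents the ordinal `Σᵢ ω^i · l[i]` (little-endian coefficients). -/

/-- The list represents the ordinal `0`. -/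
def isZero (l : List ℕ) : Prop := ∀ a ∈ l, a = 0

instance (l : List ℕ) : Decidable (isZero l) :=
  inferInstanceAs (Decidable (∀ a ∈ l, a = 0))

/-- The fundamental sequence: `fs x l` is (the representation of) `α[x]` where `α` is
represented by `l`.  It implements `0[x] = 0`, `(β+1)[x] = β` and
`(β + ω^{γ+1}·k)[x] = β + ω^{γ+1}·(k−1) + ω^γ·(x+1)`. -/
def fs (x : ℕ) : List ℕ → List ℕ
  | [] => []
  | (a+1) :: l => a :: l
  | [0] => [0]
  | 0 :: (k+1) :: l => (x+1) :: k :: l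
  | 0 :: 0 :: l => 0 :: fs x (0 :: l)
termination_by l => l.length

/-- The ordinal represented by a list of CNF coefficients. -/
noncomputable def toOrd : List ℕ → Ordinal.{0}
  | [] => 0
  | a :: l => Ordinal.omega0 * toOrd l + a

theorem toOrd_fs_lt (x : ℕ) : ∀ l : List ℕ, ¬ isZero l → toOrd (fs x l) < toOrd l := by
  have helper : ∀ (B : Ordinal) (x k : ℕ),
      Ordinal.omega0 * (B + (k : Ordinal)) + ((x + 1 : ℕ) : Ordinal) <
        Ordinal.omega0 * (B + ((k + 1 : ℕ) : Ordinal)) := by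
    intro B x k
    have e : B + ((k + 1 : ℕ) : Ordinal) = Order.succ (B + (k : Ordinal)) := by
      push_cast
      rw [← add_assoc, Ordinal.add_one_eq_succ]
    rw [e, Ordinal.mul_succ]
    exact (add_lt_add_iff_left _).2 (Ordinal.natCast_lt_omega0 (x + 1))
  intro l
  induction l using fs.induct with
  | case1 =>
      intro h
      exact absurd (by simp [isZero]) h
  | case2 a l =>
      intro _
      simp only [fs, toOrd]
      exact (add_lt_add_iff_left _).2 (by exact_mod_cast Nat.lt_succ_self a)
  | case3 =>
      intro h
      exact absurd (by simp [isZero]) h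
  | case4 k l =>
      intro _
      simp only [fs, toOrd]
      rw [Nat.cast_zero, add_zero]
      exact helper (Ordinal.omega0 * toOrd l) x k
  | case5 l ih =>
      intro h
      have h' : ¬ isZero (0 :: l) := by
        intro hz
        apply h
        intro a ha
        rcases List.mem_cons.mp ha with rfl | ha'
        · rfl
        · exact hz a ha'
      have ih' := ih h'
      simp only [fs, toOrd, Nat.cast_zero, add_zero] at ih' ⊢
      exact mul_lt_mul_of_pos_left ih' Ordinal.omega0_pos

local instance : WellFoundedRelation Ordinal.{0} := ⟨(· < ·), Ordinal.lt_wf⟩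

/-- The Hardy functions: `H_0(x) = x` and `H_α(x) = H_{α[x]}(x+1)` for `α > 0`. -/
def hardy (l : List ℕ) (x : ℕ) : ℕ :=
  if h : isZero l then x else hardy (fs x l) (x + 1)
termination_by toOrd l
decreasing_by exact toOrd_fs_lt x l h

/-- The descent relation `α ≻ₓ β` along fundamental sequences (for nonzero `α`):
`α ≻ₓ β` iff `α[x] = β` or `α[x] ≻ₓ β`. -/
inductive FSdesc (x : ℕ) : List ℕ → List ℕ → Prop
  | base {α : List ℕ} : ¬ isZero α → FSdesc x α (fs x α)
  | step {α β : List ℕ} : ¬ isZero α → FSdesc x (fs x α) β → FSdesc x α β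

/-- The successor `β + 1` on CNF coefficient lists. -/
def succC : List ℕ → List ℕ
  | [] => [1]
  | a :: l => (a + 1) :: l


section Basic

lemma isZero_nil : isZero ([] : List ℕ) := by intro a h; cases h

lemma isZero_cons {a : ℕ} {l : List ℕ} : isZero (a :: l) ↔ a = 0 ∧ isZero l := by
  constructor
  · intro h
    exact ⟨h a (List.mem_cons_self), fun b hb => h b (List.mem_cons_of_mem _ hb)⟩
  · rintro ⟨rfl, h⟩ b hb
    rcases List.mem_cons.1 hb with rfl | hb
    · rfl
    · exact h b hb

lemma toOrd_eq_zero_iff : ∀ {l : List ℕ}, toOrd l = 0 ↔ isZero l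
  | [] => by simp [toOrd, isZero_nil]
  | a :: l => by
    rw [show toOrd (a :: l) = Ordinal.omega0 * toOrd l + a from rfl, isZero_cons,
      Ordinal.add_eq_zero_iff, mul_eq_zero]
    simp [Ordinal.omega0_ne_zero, toOrd_eq_zero_iff, And.comm]

lemma head_tail_split {a b : ℕ} {A B : Ordinal}
    (h : Ordinal.omega0 * A + a = Ordinal.omega0 * B + b) : a = b ∧ A = B := by
  have h1 : (a : Ordinal.{0}) = (b : Ordinal.{0}) := by
    have := congrArg (· % Ordinal.omega0) h
    simpa [Ordinal.mul_add_mod_self, Ordinal.mod_eq_of_lt (Ordinal.nat_lt_omega0 _)] using this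
  have h2 : A = B := by
    have := congrArg (· / Ordinal.omega0) h
    simpa [Ordinal.mul_add_div _ Ordinal.omega0_ne_zero,
      Ordinal.div_eq_zero_of_lt (Ordinal.nat_lt_omega0 _)] using this
  exact ⟨Nat.cast_injective h1, h2⟩

lemma toOrd_cons_split {a b : ℕ} {l m : List ℕ} (h : toOrd (a :: l) = toOrd (b :: m)) :
    a = b ∧ toOrd l = toOrd m := by
  have := head_tail_split (A := toOrd l) (B := toOrd m) h
  exact ⟨this.1, this.2⟩

lemma hardy_zero {l : List ℕ} (h : isZero l) (x : ℕ) : hardy l x = x := by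
  rw [hardy]; simp [h]

lemma hardy_pos {l : List ℕ} (h : ¬ isZero l) (x : ℕ) : hardy l x = hardy (fs x l) (x + 1) := by
  rw [hardy]; simp [h]

end Basic
section FsLemmas

lemma fs_nil (x : ℕ) : fs x [] = [] := by simp [fs]
lemma fs_succ_head (x a : ℕ) (l : List ℕ) : fs x ((a+1) :: l) = a :: l := by simp [fs]
lemma fs_zero_succ (x k : ℕ) (l : List ℕ) : fs x (0 :: (k+1) :: l) = (x+1) :: k :: l := by
  simp [fs]
lemma fs_zero_zero (x : ℕ) (l : List ℕ) : fs x (0 :: 0 :: l) = 0 :: fs x (0 :: l) := by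
  simp [fs]

lemma fs_ne_nil (x : ℕ) : ∀ {l : List ℕ}, l ≠ [] → fs x l ≠ []
  | [], h => absurd rfl h
  | (a+1) :: l, _ => by rw [fs_succ_head]; simp
  | [0], _ => by simp [fs]
  | 0 :: (k+1) :: l, _ => by rw [fs_zero_succ]; simp
  | 0 :: 0 :: l, _ => by rw [fs_zero_zero]; simp

lemma fs_toOrd_congr (x : ℕ) : ∀ (l₁ l₂ : List ℕ), toOrd l₁ = toOrd l₂ → ¬ isZero l₁ →
    toOrd (fs x l₁) = toOrd (fs x l₂) := by
  intro l₁
  induction l₁ using fs.induct with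
  | case1 => intro l₂ _ h; exact absurd isZero_nil h
  | case2 a t₁ =>
    intro l₂ he _
    match l₂ with
    | [] =>
      exfalso
      rw [show toOrd [] = 0 from rfl] at he
      exact (by simp [isZero_cons] : ¬ isZero ((a+1) :: t₁)) (toOrd_eq_zero_iff.1 he)
    | b :: t₂ =>
      obtain ⟨rfl, ht⟩ := toOrd_cons_split he
      rw [fs_succ_head, fs_succ_head]
      show Ordinal.omega0 * toOrd t₁ + _ = Ordinal.omega0 * toOrd t₂ + _
      rw [ht]
  | case3 =>
    intro l₂ he h
    exact absurd (by simp [isZero_cons, isZero_nil]) h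
  | case4 k t₁ =>
    intro l₂ he _
    match l₂ with
    | [] =>
      exfalso
      rw [show toOrd [] = 0 from rfl] at he
      have := toOrd_eq_zero_iff.1 he
      simp [isZero_cons] at this
    | b :: t₂ =>
      obtain ⟨hb, ht⟩ := toOrd_cons_split he
      match t₂, ht with
      | [], ht =>
        exfalso
        rw [show toOrd [] = 0 from rfl] at ht
        have := toOrd_eq_zero_iff.1 ht
        simp [isZero_cons] at this
      | c :: t₂', ht =>
        obtain ⟨hc, ht'⟩ := toOrd_cons_split ht
        subst hb; rw [← hc]
        rw [fs_zero_succ, fs_zero_succ]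
        show Ordinal.omega0 * (Ordinal.omega0 * toOrd t₁ + _) + _
          = Ordinal.omega0 * (Ordinal.omega0 * toOrd t₂' + _) + _
        rw [ht']
  | case5 t₁ ih =>
    intro l₂ he h
    have h' : ¬ isZero (0 :: t₁) := by
      simp only [isZero_cons] at h ⊢; tauto
    match l₂ with
    | [] =>
      exfalso
      rw [show toOrd [] = 0 from rfl] at he
      exact h (toOrd_eq_zero_iff.1 he)
    | b :: t₂ =>
      obtain ⟨hb, ht⟩ := toOrd_cons_split he
      match t₂, ht with
      | [], ht =>
        exfalso
        apply h
        rw [isZero_cons, isZero_cons]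
        have : toOrd (0 :: t₁) = 0 := by
          rw [ht]; rfl
        have := toOrd_eq_zero_iff.1 this
        rw [isZero_cons] at this
        exact ⟨rfl, rfl, this.2⟩
      | c :: t₂', ht =>
        obtain ⟨hc, ht'⟩ := toOrd_cons_split ht
        subst hb
        have hc0 : c = 0 := hc.symm
        subst hc0
        rw [fs_zero_zero, fs_zero_zero]
        have he' : toOrd (0 :: t₁) = toOrd (0 :: t₂') := by
          show Ordinal.omega0 * toOrd t₁ + _ = Ordinal.omega0 * toOrd t₂' + _
          rw [ht']
        have := ih (0 :: t₂') he' h'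
        show Ordinal.omega0 * toOrd (fs x (0 :: t₁)) + _
          = Ordinal.omega0 * toOrd (fs x (0 :: t₂')) + _
        rw [this]

lemma hardy_congr : ∀ (o : Ordinal.{0}) (l₁ l₂ : List ℕ), toOrd l₁ = o → toOrd l₂ = toOrd l₁ →
    ∀ x, hardy l₁ x = hardy l₂ x := by
  intro o
  induction o using Ordinal.induction with
  | _ o IH =>
    intro l₁ l₂ h1 h2 x
    subst h1
    by_cases hz : isZero l₁
    · have hz2 : isZero l₂ := toOrd_eq_zero_iff.1 (h2.trans (toOrd_eq_zero_iff.2 hz))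
      rw [hardy_zero hz, hardy_zero hz2]
    · have hz2 : ¬ isZero l₂ := fun hh => hz (toOrd_eq_zero_iff.1
        (by rw [← h2]; exact toOrd_eq_zero_iff.2 hh))
      rw [hardy_pos hz, hardy_pos hz2]
      exact IH (toOrd (fs x l₁)) (toOrd_fs_lt x l₁ hz) _ _ rfl
        (fs_toOrd_congr x l₁ l₂ h2.symm hz).symm (x+1)

end FsLemmas
section SuccC

lemma succC_not_isZero (δ : List ℕ) : ¬ isZero (succC δ) := by
  cases δ <;> simp [succC, isZero_cons]

lemma fs_succC (x : ℕ) {δ : List ℕ} (h : δ ≠ []) : fs x (succC δ) = δ := by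
  match δ with
  | [] => exact absurd rfl h
  | a :: l => rw [show succC (a :: l) = (a+1) :: l from rfl, fs_succ_head]

lemma hardy_succC (δ : List ℕ) (x : ℕ) : hardy (succC δ) x = hardy δ (x + 1) := by
  match δ with
  | [] =>
    rw [hardy_pos (succC_not_isZero _)]
    rw [show succC [] = [1] from rfl, show (1 : ℕ) = 0 + 1 from rfl, fs_succ_head]
    rw [hardy_zero (by simp [isZero_cons, isZero_nil]), hardy_zero isZero_nil]
  | a :: l =>
    rw [hardy_pos (succC_not_isZero _), fs_succC x (by simp)]

end SuccC

section Desc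

lemma FSdesc.notZero {x : ℕ} {α β : List ℕ} (h : FSdesc x α β) : ¬ isZero α := by
  cases h <;> assumption

lemma FSdesc.cases' {x : ℕ} {α β : List ℕ} (h : FSdesc x α β) :
    β = fs x α ∨ FSdesc x (fs x α) β := by
  cases h with
  | base h => exact Or.inl rfl
  | step h h2 => exact Or.inr h2

lemma FSdesc.trans' {x : ℕ} : ∀ {a b c : List ℕ}, FSdesc x a b → FSdesc x b c → FSdesc x a c := by
  intro a b c h1
  induction h1 with
  | base h => intro h2; exact .step h h2
  | step h _ ih => intro h2; exact .step h (ih h2)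

lemma fsdesc_head (x : ℕ) : ∀ (c d : ℕ) (t : List ℕ), d < c → FSdesc x (c :: t) (d :: t) := by
  intro c
  induction c with
  | zero => intro d t h; omega
  | succ c ih =>
    intro d t h
    rcases eq_or_lt_of_le (Nat.lt_succ_iff.mp h) with rfl | h'
    · exact (fs_succ_head x d t) ▸ FSdesc.base (by simp [isZero_cons])
    · refine .step (by simp [isZero_cons]) ?_
      rw [fs_succ_head]
      exact ih d t h'

lemma fsdesc_cons0 (x : ℕ) : ∀ {δ : List ℕ}, ¬ isZero δ → FSdesc x (0 :: δ) (0 :: fs x δ) := by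
  intro δ h
  match δ, h with
  | (a+1) :: l, _ =>
    rw [fs_succ_head]
    refine FSdesc.step (by simp [isZero_cons]) ?_
    rw [fs_zero_succ]
    exact fsdesc_head x (x+1) 0 (a :: l) (Nat.succ_pos x)
  | 0 :: l, h =>
    have := FSdesc.base (x := x) (α := 0 :: 0 :: l) (by
      simp only [isZero_cons] at h ⊢; tauto)
    rwa [fs_zero_zero] at this

lemma fsdesc_cons0_mono (x : ℕ) : ∀ {δ ε : List ℕ}, FSdesc x δ ε → FSdesc x (0 :: δ) (0 :: ε) := by
  intro δ ε h
  induction h with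
  | base h => exact fsdesc_cons0 x h
  | step h h2 ih => exact (fsdesc_cons0 x h).trans' ih

lemma key_succ (x : ℕ) : ∀ t : List ℕ, ¬ isZero t →
    fs (x+1) (0 :: t) = succC (fs x (0 :: t)) ∨
      FSdesc (x+1) (fs (x+1) (0 :: t)) (succC (fs x (0 :: t))) := by
  intro t
  induction t with
  | nil => intro h; exact absurd isZero_nil h
  | cons c l ih =>
    intro h
    match c with
    | k+1 =>
      left
      rw [fs_zero_succ, fs_zero_succ]
      rfl
    | 0 =>
      right
      have hl : ¬ isZero l := fun hz => h (isZero_cons.2 ⟨rfl, hz⟩)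
      rw [fs_zero_zero, fs_zero_zero]
      obtain ⟨u0, u', hu⟩ : ∃ a l', fs x (0 :: l) = a :: l' := by
        have := fs_ne_nil x (l := 0 :: l) (by simp)
        match hfs : fs x (0 :: l), this with
        | a :: l', _ => exact ⟨a, l', rfl⟩
      rcases ih hl with heq | hd
      · rw [heq, hu]
        refine FSdesc.step (by simp [succC, isZero_cons]) ?_
        rw [show succC (u0 :: u') = (u0 + 1) :: u' from rfl, fs_zero_succ]
        rw [show succC (0 :: u0 :: u') = 1 :: u0 :: u' from rfl]
        exact fsdesc_head (x+1) (x+2) 1 (u0 :: u') (by omega)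
      · rw [hu] at hd ⊢
        have d1 : FSdesc (x+1) (0 :: fs (x+1) (0 :: l)) (0 :: (u0 + 1) :: u') :=
          fsdesc_cons0_mono _ (by rw [show succC (u0 :: u') = (u0+1) :: u' from rfl] at hd; exact hd)
        refine d1.trans' ?_
        refine FSdesc.step (by simp [isZero_cons]) ?_
        rw [fs_zero_succ]
        rw [show succC (0 :: u0 :: u') = 1 :: u0 :: u' from rfl]
        exact fsdesc_head (x+1) (x+2) 1 (u0 :: u') (by omega)

lemma step1_base (x : ℕ) : ∀ {α : List ℕ}, ¬ isZero α →
    FSdesc (x+1) α (succC (fs x α)) ∨ α = succC (fs x α) := by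
  intro α h
  match α, h with
  | [], h => exact absurd isZero_nil h
  | (a+1) :: l, _ =>
    right
    rw [fs_succ_head]
    rfl
  | 0 :: t, h =>
    have ht : ¬ isZero t := fun hz => h (isZero_cons.2 ⟨rfl, hz⟩)
    rcases key_succ x t ht with heq | hd
    · left
      have := FSdesc.base (x := x+1) h
      rwa [heq] at this
    · exact Or.inl (FSdesc.step h hd)

lemma desc_self_fs (x : ℕ) {α : List ℕ} (h : ¬ isZero α) : FSdesc (x+1) α (fs x α) := by
  have hne : α ≠ [] := by rintro rfl; exact h isZero_nil
  rcases step1_base x h with hd | he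
  · refine hd.trans' ?_
    have := FSdesc.base (x := x+1) (succC_not_isZero (fs x α))
    rwa [fs_succC (x+1) (fs_ne_nil x hne)] at this
  · have hfs : fs (x+1) α = fs x α := by
      conv_lhs => rw [he]
      rw [fs_succC (x+1) (fs_ne_nil x hne)]
    exact hfs ▸ FSdesc.base h

lemma statement1 {n : ℕ} {α β : List ℕ} (h : FSdesc n α β) :
    FSdesc (n+1) α (succC β) ∨ α = succC β := by
  induction h with
  | base h => exact step1_base n h
  | step h hd ih =>
    left
    have h0 : FSdesc (n+1) _ _ := desc_self_fs n h
    rcases ih with h1 | h1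
    · exact h0.trans' h1
    · rw [← h1]; exact h0

end Desc
lemma main23 : ∀ (o : Ordinal.{0}) (α : List ℕ), toOrd α = o →
    (∀ (β : List ℕ) (n m : ℕ), FSdesc n α β → m ≤ n → hardy β m < hardy α n) ∧
    (∀ n m : ℕ, m < n → hardy α m < hardy α n) := by
  intro o
  induction o using Ordinal.induction with
  | _ o IH =>
    intro α hα
    subst hα
    by_cases hz : isZero α
    · constructor
      · intro β n m hd _; exact absurd hz hd.notZero
      · intro n m h; rw [hardy_zero hz, hardy_zero hz]; exact h
    · have mono : ∀ l : List ℕ, toOrd l < toOrd α → ∀ m n : ℕ, m < n → hardy l m < hardy l n :=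
        fun l hl m n h => (IH _ hl l rfl).2 n m h
      have desc : ∀ l : List ℕ, toOrd l < toOrd α →
          ∀ (β : List ℕ) (n m : ℕ), FSdesc n l β → m ≤ n → hardy β m < hardy l n :=
        fun l hl => (IH _ hl l rfl).1
      have step3 : ∀ m : ℕ, hardy α m < hardy α (m+1) := by
        intro m
        rw [hardy_pos hz, hardy_pos hz]
        rcases step1_base m hz with hd | he
        · rcases hd.cases' with he2 | hd2
          · rw [← he2, hardy_succC]
            exact mono _ (toOrd_fs_lt m α hz) _ _ (by omega)
          · calc hardy (fs m α) (m+1) < hardy (fs m α) (m+2) :=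
                  mono _ (toOrd_fs_lt m α hz) _ _ (by omega)
              _ = hardy (succC (fs m α)) (m+1) := (hardy_succC _ _).symm
              _ < hardy (fs (m+1) α) (m+1) := desc _ (toOrd_fs_lt (m+1) α hz) _ _ _ hd2 le_rfl
              _ < hardy (fs (m+1) α) (m+2) := mono _ (toOrd_fs_lt (m+1) α hz) _ _ (by omega)
        · have hne : α ≠ [] := by rintro rfl; exact hz isZero_nil
          have hfs : fs (m+1) α = fs m α := by
            conv_lhs => rw [he]
            rw [fs_succC (m+1) (fs_ne_nil m hne)]
          rw [hfs]
          exact mono _ (toOrd_fs_lt m α hz) _ _ (by omega)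
      have part3 : ∀ n m : ℕ, m < n → hardy α m < hardy α n := by
        intro n
        induction n with
        | zero => intro m h; omega
        | succ n ihn =>
          intro m h
          rcases Nat.lt_succ_iff_lt_or_eq.1 h with h' | rfl
          · exact (ihn m h').trans (step3 n)
          · exact step3 m
      refine ⟨?_, part3⟩
      intro β n m hd hmn
      rcases hd.cases' with rfl | hd2
      · rw [hardy_pos hz]
        exact mono _ (toOrd_fs_lt n α hz) m (n+1) (by omega)
      · calc hardy β m < hardy (fs n α) n := desc _ (toOrd_fs_lt n α hz) β n m hd2 hmn
          _ < hardy (fs n α) (n+1) := mono _ (toOrd_fs_lt n α hz) _ _ (by omega)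
          _ = hardy α n := (hardy_pos hz n).symm
section Add

def addC : List ℕ → List ℕ → List ℕ
  | l, [] => l
  | [], l => l
  | a :: l, b :: m => (a + b) :: addC l m

lemma addC_nil_left : ∀ l : List ℕ, addC [] l = l
  | [] => rfl
  | _ :: _ => rfl

lemma addC_nil_right (l : List ℕ) : addC l [] = l := by cases l <;> rfl

lemma addC_cons (a b : ℕ) (l m : List ℕ) : addC (a :: l) (b :: m) = (a + b) :: addC l m := rfl

lemma getD_addC : ∀ (a b : List ℕ) (j : ℕ), (addC a b).getD j 0 = a.getD j 0 + b.getD j 0 := by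
  intro a
  induction a with
  | nil => intro b j; rw [addC_nil_left]; simp
  | cons x l ih =>
    intro b j
    cases b with
    | nil => rw [addC_nil_right]; simp
    | cons y m =>
      rw [addC_cons]
      cases j with
      | zero => simp
      | succ j => simpa using ih m j

lemma isZero_iff_getD {l : List ℕ} : isZero l ↔ ∀ j, l.getD j 0 = 0 := by
  induction l with
  | nil => simp [isZero_nil]
  | cons a t ih =>
    rw [isZero_cons, ih]
    constructor
    · rintro ⟨rfl, h⟩ j
      cases j with
      | zero => rfl
      | succ j => simpa using h j
    · intro h
      exact ⟨by simpa using h 0, fun j => by simpa using h (j+1)⟩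

lemma exists_getD {l : List ℕ} (h : ¬ isZero l) : ∃ j, l.getD j 0 ≠ 0 := by
  by_contra hc
  push_neg at hc
  exact h (isZero_iff_getD.2 hc)

lemma toOrd_addC : ∀ a b : List ℕ, (∀ i j, a.getD i 0 ≠ 0 → b.getD j 0 ≠ 0 → j ≤ i) →
    toOrd (addC a b) = toOrd a + toOrd b := by
  intro a
  induction a with
  | nil =>
    intro b _
    rw [addC_nil_left, show toOrd [] = 0 from rfl, zero_add]
  | cons x l ih =>
    intro b cond
    cases b with
    | nil => rw [addC_nil_right, show toOrd [] = 0 from rfl, add_zero]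
    | cons y m =>
      rw [addC_cons]
      have cond' : ∀ i j, l.getD i 0 ≠ 0 → m.getD j 0 ≠ 0 → j ≤ i := by
        intro i j hi hj
        have := cond (i+1) (j+1) (by simpa using hi) (by simpa using hj)
        omega
      have ihm := ih m cond'
      show Ordinal.omega0 * toOrd (addC l m) + ((x + y : ℕ) : Ordinal)
        = (Ordinal.omega0 * toOrd l + x) + (Ordinal.omega0 * toOrd m + y)
      by_cases hm : toOrd m = 0
      · rw [ihm, hm, add_zero, mul_zero, zero_add, Nat.cast_add, ← add_assoc]
      · have hx : x = 0 := by
          by_contra hx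
          obtain ⟨j, hj⟩ := exists_getD (fun hz => hm (toOrd_eq_zero_iff.2 hz))
          have := cond 0 (j+1) (by simpa using hx) (by simpa using hj)
          omega
        subst hx
        rw [ihm, mul_add]
        simp [add_assoc]

lemma fs_support (x : ℕ) : ∀ l : List ℕ, ∀ j, (fs x l).getD j 0 ≠ 0 →
    ∃ j', j ≤ j' ∧ l.getD j' 0 ≠ 0 := by
  intro l
  induction l using fs.induct with
  | case1 => intro j h; rw [fs_nil] at h; simp at h
  | case2 a t =>
    intro j h
    rw [fs_succ_head] at h
    cases j with
    | zero => exact ⟨0, le_rfl, by simp⟩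
    | succ j => exact ⟨j+1, le_rfl, by simpa using h⟩
  | case3 =>
    intro j h
    rw [show fs x [0] = [0] from by simp [fs]] at h
    cases j with
    | zero => simp at h
    | succ j => simp at h
  | case4 k t =>
    intro j h
    rw [fs_zero_succ] at h
    match j with
    | 0 => exact ⟨1, by omega, by simp⟩
    | 1 => exact ⟨1, le_rfl, by simp⟩
    | j+2 => exact ⟨j+2, le_rfl, by simpa using h⟩
  | case5 t ih =>
    intro j h
    rw [fs_zero_zero] at h
    cases j with
    | zero => simp at h
    | succ j =>
      obtain ⟨j', hjj', hj'⟩ := ih j (by simpa using h)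
      cases j' with
      | zero => simp at hj'
      | succ j'' => exact ⟨j''+2, by omega, by simpa using hj'⟩

lemma fs_addC (n : ℕ) : ∀ b a : List ℕ, ¬ isZero b →
    (∀ i j, a.getD i 0 ≠ 0 → b.getD j 0 ≠ 0 → j ≤ i) →
    fs n (addC a b) = addC a (fs n b) := by
  intro b
  induction b with
  | nil => intro a h; exact absurd isZero_nil h
  | cons y m ih =>
    intro a hb cond
    cases a with
    | nil => rw [addC_nil_left, addC_nil_left]
    | cons x l =>
      match y with
      | yy+1 =>
        have eR : fs n ((yy+1) :: m) = yy :: m := fs_succ_head n yy m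
        rw [eR]
        show fs n ((x + yy + 1) :: addC l m) = (x + yy) :: addC l m
        exact fs_succ_head n (x+yy) (addC l m)
      | 0 =>
        have hm : ¬ isZero m := fun hz => hb (isZero_cons.2 ⟨rfl, hz⟩)
        have hx : x = 0 := by
          by_contra hx
          obtain ⟨j, hj⟩ := exists_getD hm
          have := cond 0 (j+1) (by simpa using hx) (by simpa using hj)
          omega
        subst hx
        match m, hm, cond with
        | (k+1) :: m', _, _ =>
          cases l with
          | nil =>
            simp only [addC_cons, addC_nil_left, Nat.zero_add]
            rw [fs_zero_succ]
            simp [addC_cons, addC_nil_left]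
          | cons c l' =>
            simp only [addC_cons, addC_nil_left, Nat.zero_add, Nat.add_succ]
            rw [fs_zero_succ, fs_zero_succ]
            simp [addC_cons]
        | 0 :: m', hm, cond =>
          have hsup : ∀ j, ((0:ℕ) :: 0 :: m').getD j 0 ≠ 0 → 2 ≤ j := by
            intro j hj
            match j with
            | 0 => simp at hj
            | 1 => simp at hj
            | j+2 => omega
          have hl0 : l = [] ∨ ∃ l'', l = 0 :: l'' := by
            cases l with
            | nil => exact Or.inl rfl
            | cons c l' =>
              have hc : c = 0 := by
                by_contra hc
                obtain ⟨j, hj⟩ := exists_getD hm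
                have h2 := cond 1 (j+1) (by simpa using hc) (by simpa using hj)
                have h3 := hsup (j+1) (by simpa using hj)
                omega
              subst hc
              exact Or.inr ⟨l', rfl⟩
          rcases hl0 with rfl | ⟨l', rfl⟩
          · simp only [addC_cons, addC_nil_left, Nat.zero_add]
            rw [fs_zero_zero]
            simp [addC_cons, addC_nil_left]
          · have cond' : ∀ i j, ((0:ℕ) :: l').getD i 0 ≠ 0 → ((0:ℕ) :: m').getD j 0 ≠ 0 →
                j ≤ i := by
              intro i j hi hj
              match i, j with
              | 0, _ => simp at hi
              | _, 0 => simp at hj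
              | i+1, j+1 =>
                have := cond (i+2) (j+2) (by simpa using hi) (by simpa using hj)
                omega
            have hm' : ¬ isZero ((0:ℕ) :: m') := hm
            simp only [addC_cons, Nat.zero_add, Nat.add_zero]
            rw [fs_zero_zero, fs_zero_zero]
            have e1 : (0:ℕ) :: addC l' m' = addC (0 :: l') (0 :: m') := by
              simp [addC_cons]
            rw [e1, ih (0 :: l') hm' cond']
            simp [addC_cons]

end Add
lemma main4 : ∀ (o : Ordinal.{0}) (b : List ℕ), toOrd b = o → ∀ a : List ℕ, ¬ isZero b →
    (∀ i j, a.getD i 0 ≠ 0 → b.getD j 0 ≠ 0 → j ≤ i) →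
    ∀ n, hardy (addC a b) n = hardy a (hardy b n) := by
  intro o
  induction o using Ordinal.induction with
  | _ o IH =>
    intro b hb' a hb cond n
    subst hb'
    have hnez : ¬ isZero (addC a b) := by
      rw [isZero_iff_getD]
      intro hz
      apply hb
      rw [isZero_iff_getD]
      intro j
      have := hz j
      rw [getD_addC] at this
      omega
    rw [hardy_pos hnez, fs_addC n b a hb cond, hardy_pos hb]
    have condf : ∀ i j, a.getD i 0 ≠ 0 → (fs n b).getD j 0 ≠ 0 → j ≤ i := by
      intro i j hi hj
      obtain ⟨j', hjj', hj'⟩ := fs_support n b j hj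
      exact le_trans hjj' (cond i j' hi hj')
    by_cases hfz : isZero (fs n b)
    · rw [hardy_zero hfz]
      have he : toOrd (addC a (fs n b)) = toOrd a := by
        rw [toOrd_addC a _ condf, toOrd_eq_zero_iff.2 hfz, add_zero]
      exact hardy_congr (toOrd (addC a (fs n b))) _ a rfl he.symm (n+1)
    · exact IH (toOrd (fs n b)) (toOrd_fs_lt n b hb) _ rfl a hfz condf (n+1)


/-- For ordinals `α, β < ω^ω` (given by CNF coefficient lists) and
naturals `n, m`:
1. if `α ≻ₙ β` then `α ≻_{n+1} β+1` or `α = β+1`;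
2. if `α ≻ₙ β` and `n ≥ m` then `H_α(n) > H_β(m)`;
3. if `n > m` then `H_α(n) > H_α(m)`;
4. if `α, β > 0` and the least exponent of the CNF of `α` is at least the greatest
   exponent of the CNF of `β` (i.e. every exponent of `α` is ≥ every exponent of `β`),
   then `H_{α+β}(n) = H_α(H_β(n))` — stated for every representation `γ` of the
   ordinal sum `α + β`. -/
theorem hardy_lemmas (α β : List ℕ) (n m : ℕ) :
    (FSdesc n α β → (FSdesc (n + 1) α (succC β) ∨ α = succC β)) ∧
    (FSdesc n α β → m ≤ n → hardy β m < hardy α n) ∧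
    (m < n → hardy α m < hardy α n) ∧
    (¬ isZero α → ¬ isZero β →
      (∀ i j : ℕ, α.getD i 0 ≠ 0 → β.getD j 0 ≠ 0 → j ≤ i) →
      ∀ γ : List ℕ, toOrd γ = toOrd α + toOrd β →
        hardy γ n = hardy α (hardy β n)) := by
  refine ⟨fun h => statement1 h,
    fun hd hmn => (main23 (toOrd α) α rfl).1 β n m hd hmn,
    fun h => (main23 (toOrd α) α rfl).2 n m h, ?_⟩
  intro _ hb cond γ hγ
  have h1 : toOrd γ = toOrd (addC α β) := by rw [hγ, toOrd_addC α β cond]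
  rw [hardy_congr (toOrd γ) γ (addC α β) rfl h1.symm n]
  exact main4 (toOrd β) β rfl α hb cond n
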